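/- Let α ∈ (0,1). There exists a constant C > 0 depending only on d and α such that for every everywhere differentiable u : ℝ^d → ℝ, ‖∇u‖_{L_∞(ℝ^d)} ≤ C Σ_{k=0}^∞ 2^{k(1−α)} sup_{x_0∈ℝ^d} [u]_{Λ^α(B_{2^{−k}}(x_0))} + C sup{ |u(x)−u(x')| : x, x' ∈ ℝ^d, |x−x'| = 1 }, and the first sum is further bounded by C Σ_{k=0}^∞ 2^{k(1−α)} sup_{x_0∈ℝ^d} inf_{p∈𝒫_1} [u−p]_{α;B_{2^{−k}}(x_0)}. -/

import Mathlib

open MeasureTheory Metric Filter Set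
open scoped ENNReal Topology

noncomputable section

/-- Hölder seminorm `[u]_{γ;Ω}` (valued in `ℝ≥0∞`). -/
def holderSemi {E F : Type*} [NormedAddCommGroup E] [NormedAddCommGroup F]
    (γ : ℝ) (Ω : Set E) (u : E → F) : ℝ≥0∞ :=
  ⨆ (x : E) (_ : x ∈ Ω) (y : E) (_ : y ∈ Ω) (_ : x ≠ y),
    ENNReal.ofReal (‖u x - u y‖ / ‖x - y‖ ^ γ)

/-- Zygmund seminorm `[u]_{Λ^α(Ω)}` (valued in `ℝ≥0∞`). -/
def zygmundSemi {E : Type*} [NormedAddCommGroup E] (α : ℝ) (Ω : Set E) (u : E → ℝ) : ℝ≥0∞ :=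
  ⨆ (x : E) (h : E) (_ : h ≠ 0) (_ : x ∈ Ω) (_ : x + h ∈ Ω) (_ : x - h ∈ Ω),
    ENNReal.ofReal (|u (x + h) + u (x - h) - 2 * u x| / ‖h‖ ^ α)

/-- The `L_∞` norm of `u` on `Ω` (valued in `ℝ≥0∞`). -/
def eSupNorm {E : Type*} (Ω : Set E) (u : E → ℝ) : ℝ≥0∞ :=
  ⨆ (x : E) (_ : x ∈ Ω), ENNReal.ofReal |u x|

/-- A Dini function: nonnegative, nondecreasing on `(0,∞)`, with `∫_0^1 ω(r)/r dr < ∞`. -/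
def IsDini (ω : ℝ → ℝ) : Prop :=
  (∀ r, 0 < r → 0 ≤ ω r) ∧ MonotoneOn ω (Set.Ioi (0:ℝ)) ∧
    IntegrableOn (fun r => ω r / r) (Set.Ioc (0:ℝ) 1)

lemma zyg_le_two_holder {E : Type*} [NormedAddCommGroup E] (α : ℝ) (Ω : Set E) (v : E → ℝ) :
    zygmundSemi α Ω v ≤ 2 * holderSemi α Ω v := by
  refine iSup_le fun x => iSup_le fun h => iSup_le fun hh => iSup_le fun hx =>
    iSup_le fun hxp => iSup_le fun hxm => ?_
  have hne1 : x + h ≠ x := by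
    intro hc; exact hh (by simpa using hc)
  have hne2 : x - h ≠ x := by
    intro hc; exact hh (by simpa [sub_eq_self] using hc)
  have hpos : (0:ℝ) < ‖h‖ ^ α := Real.rpow_pos_of_pos (norm_pos_iff.2 hh) α
  have hb1 : ENNReal.ofReal (|v (x + h) - v x| / ‖h‖ ^ α) ≤ holderSemi α Ω v := by
    refine le_iSup_of_le (x + h) (le_iSup_of_le hxp (le_iSup_of_le x (le_iSup_of_le hx
      (le_iSup_of_le hne1 ?_))))
    simp [add_sub_cancel_left, Real.norm_eq_abs]
  have hb2 : ENNReal.ofReal (|v (x - h) - v x| / ‖h‖ ^ α) ≤ holderSemi α Ω v := by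
    refine le_iSup_of_le (x - h) (le_iSup_of_le hxm (le_iSup_of_le x (le_iSup_of_le hx
      (le_iSup_of_le hne2 ?_))))
    simp [sub_sub_cancel_left, Real.norm_eq_abs]
  have hnum : |v (x + h) + v (x - h) - 2 * v x| ≤ |v (x + h) - v x| + |v (x - h) - v x| := by
    have : v (x + h) + v (x - h) - 2 * v x = (v (x + h) - v x) + (v (x - h) - v x) := by ring
    rw [this]; exact abs_add_le _ _
  calc ENNReal.ofReal (|v (x + h) + v (x - h) - 2 * v x| / ‖h‖ ^ α)
      ≤ ENNReal.ofReal (|v (x + h) - v x| / ‖h‖ ^ α + |v (x - h) - v x| / ‖h‖ ^ α) := by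
        refine ENNReal.ofReal_le_ofReal ?_
        rw [← add_div]
        gcongr
    _ ≤ ENNReal.ofReal (|v (x + h) - v x| / ‖h‖ ^ α) +
        ENNReal.ofReal (|v (x - h) - v x| / ‖h‖ ^ α) := ENNReal.ofReal_add_le
    _ ≤ holderSemi α Ω v + holderSemi α Ω v := add_le_add hb1 hb2
    _ = 2 * holderSemi α Ω v := (two_mul _).symm

lemma zyg_sub_affine {E : Type*} [NormedAddCommGroup E] [InnerProductSpace ℝ E]
    (α a0 : ℝ) (b : E) (Ω : Set E) (u : E → ℝ) :
    zygmundSemi α Ω (fun y => u y - (a0 + (inner ℝ b y : ℝ))) = zygmundSemi α Ω u := by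
  unfold zygmundSemi
  refine iSup_congr fun x => iSup_congr fun h => iSup_congr fun _ => iSup_congr fun _ =>
    iSup_congr fun _ => iSup_congr fun _ => ?_
  congr 2
  beta_reduce
  rw [inner_add_right, inner_sub_right]
  ring_nf

/-- Gradient bound in terms of a series of Zygmund seminorms (`σ = 1` case of Lemma 2.3). -/
theorem gradient_bound_zygmund_series
    (d : ℕ) (hd : 1 ≤ d) (α : ℝ) (hα : 0 < α) (hα1 : α < 1) :
    ∃ C : ℝ, 0 < C ∧
      ∀ u : EuclideanSpace ℝ (Fin d) → ℝ, Differentiable ℝ u →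
        (⨆ x : EuclideanSpace ℝ (Fin d), ENNReal.ofReal ‖gradient u x‖) ≤
            ENNReal.ofReal C *
              (∑' k : ℕ, ENNReal.ofReal ((2:ℝ) ^ ((k:ℝ) * (1 - α))) *
                ⨆ x0 : EuclideanSpace ℝ (Fin d),
                  zygmundSemi α (ball x0 ((2:ℝ) ^ (-(k:ℝ)))) u)
            + ENNReal.ofReal C *
              ⨆ (x : EuclideanSpace ℝ (Fin d)) (x' : EuclideanSpace ℝ (Fin d))
                (_ : ‖x - x'‖ = 1), ENNReal.ofReal |u x - u x'| ∧
          (∑' k : ℕ, ENNReal.ofReal ((2:ℝ) ^ ((k:ℝ) * (1 - α))) *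
              ⨆ x0 : EuclideanSpace ℝ (Fin d),
                zygmundSemi α (ball x0 ((2:ℝ) ^ (-(k:ℝ)))) u) ≤
            ENNReal.ofReal C *
              ∑' k : ℕ, ENNReal.ofReal ((2:ℝ) ^ ((k:ℝ) * (1 - α))) *
                ⨆ x0 : EuclideanSpace ℝ (Fin d),
                  ⨅ (a0 : ℝ) (b : EuclideanSpace ℝ (Fin d)),
                    holderSemi α (ball x0 ((2:ℝ) ^ (-(k:ℝ))))
                      (fun x => u x - (a0 + (inner ℝ b x : ℝ))) := by
  refine ⟨2, two_pos, fun u hu => ?_⟩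
  have hof2 : ENNReal.ofReal (2:ℝ) = 2 := by
    rw [ENNReal.ofReal_ofNat]
  constructor
  · -- Part 1
    rw [hof2]
    set S := (∑' k : ℕ, ENNReal.ofReal ((2:ℝ) ^ ((k:ℝ) * (1 - α))) *
        ⨆ x0 : EuclideanSpace ℝ (Fin d), zygmundSemi α (ball x0 ((2:ℝ) ^ (-(k:ℝ)))) u) with hSdef
    set M := (⨆ (x : EuclideanSpace ℝ (Fin d)) (x' : EuclideanSpace ℝ (Fin d))
        (_ : ‖x - x'‖ = 1), ENNReal.ofReal |u x - u x'|) with hMdef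
    rcases eq_or_ne S ⊤ with hS | hS
    · rw [hS, ENNReal.mul_top (by norm_num), top_add]; exact le_top
    rcases eq_or_ne M ⊤ with hM | hM
    · rw [hM, ENNReal.mul_top (by norm_num), add_top]; exact le_top
    refine iSup_le fun x => ?_
    rcases eq_or_ne (gradient u x) 0 with hg0 | hg0
    · simp [hg0]
    set g := gradient u x with hgdef
    have hgn : ‖g‖ ≠ 0 := norm_ne_zero_iff.2 hg0
    set h : EuclideanSpace ℝ (Fin d) := ‖g‖⁻¹ • g with hhdef
    have hh1 : ‖h‖ = 1 := by
      rw [hhdef, norm_smul, norm_inv, norm_norm, inv_mul_cancel₀ hgn]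
    have hhne : h ≠ 0 := by intro hc; rw [hc] at hh1; simp at hh1
    have hder : HasFDerivAt u (InnerProductSpace.toDual ℝ _ g) x :=
      ((hu x).hasGradientAt).hasFDerivAt
    have hcn : Tendsto (fun n : ℕ => ‖(2:ℝ)^n‖) atTop atTop := by
      have he : ∀ n : ℕ, ‖(2:ℝ)^n‖ = 2^n := fun n => by
        rw [Real.norm_eq_abs, abs_of_pos (pow_pos two_pos n)]
      simp only [he]
      exact tendsto_pow_atTop_atTop_of_one_lt one_lt_two
    have hval : (InnerProductSpace.toDual ℝ _ g) h = ‖g‖ := by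
      rw [InnerProductSpace.toDual_apply_apply, hhdef, real_inner_smul_right,
        real_inner_self_eq_norm_sq]
      field_simp
    set D : ℕ → ℝ := fun n => ((2:ℝ)^n) * (u (x + ((2:ℝ)^n)⁻¹ • h) - u x) with hDdef
    have hlim' : Tendsto D atTop (𝓝 ‖g‖) := by
      rw [hDdef, ← hval]
      simpa [smul_eq_mul] using hder.lim h hcn
    have hterm : ∀ k : ℕ, ENNReal.ofReal ((2:ℝ) ^ ((k:ℝ) * (1 - α))) *
        (⨆ x0 : EuclideanSpace ℝ (Fin d), zygmundSemi α (ball x0 ((2:ℝ) ^ (-(k:ℝ)))) u) ≠ ⊤ :=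
      ENNReal.ne_top_of_tsum_ne_top (by rw [← hSdef]; exact hS)
    set b : ℕ → ℝ := fun k => (ENNReal.ofReal ((2:ℝ) ^ ((k:ℝ) * (1 - α))) *
        (⨆ x0 : EuclideanSpace ℝ (Fin d),
          zygmundSemi α (ball x0 ((2:ℝ) ^ (-(k:ℝ)))) u)).toReal with hbdef
    have hbsum : Summable b := ENNReal.summable_toReal (by rw [← hSdef]; exact hS)
    have hbnn : ∀ k, 0 ≤ b k := fun k => ENNReal.toReal_nonneg
    have hkey : ∀ k : ℕ, |D (k+1) - D k| ≤ b k := by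
      intro k
      set t : ℝ := ((2:ℝ)^(k+1))⁻¹ with htdef
      have ht0 : (0:ℝ) < t := by positivity
      set w : EuclideanSpace ℝ (Fin d) := t • h with hwdef
      set cpt : EuclideanSpace ℝ (Fin d) := x + w with hcdef
      have hwnorm : ‖w‖ = t := by
        rw [hwdef, norm_smul, hh1, mul_one, Real.norm_eq_abs, abs_of_pos ht0]
      have hwne : w ≠ 0 := by rw [hwdef]; exact smul_ne_zero (ne_of_gt ht0) hhne
      have hrpos : (0:ℝ) < (2:ℝ) ^ (-(k:ℝ)) := Real.rpow_pos_of_pos two_pos _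
      have htr : t < (2:ℝ) ^ (-(k:ℝ)) := by
        rw [htdef, Real.rpow_neg (by norm_num), Real.rpow_natCast]
        exact inv_strictAnti₀ (by positivity)
          (pow_lt_pow_right₀ one_lt_two (Nat.lt_succ_self k))
      have hmem1 : cpt ∈ ball cpt ((2:ℝ)^(-(k:ℝ))) := mem_ball_self hrpos
      have hmem2 : cpt + w ∈ ball cpt ((2:ℝ)^(-(k:ℝ))) := by
        rw [mem_ball, dist_eq_norm, add_sub_cancel_left, hwnorm]; exact htr
      have hmem3 : cpt - w ∈ ball cpt ((2:ℝ)^(-(k:ℝ))) := by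
        rw [mem_ball, dist_eq_norm, sub_sub_cancel_left, norm_neg, hwnorm]; exact htr
      have hz2 : ENNReal.ofReal (|u (cpt + w) + u (cpt - w) - 2 * u cpt| / ‖w‖ ^ α) ≤
          ⨆ x0 : EuclideanSpace ℝ (Fin d), zygmundSemi α (ball x0 ((2:ℝ)^(-(k:ℝ)))) u := by
        have hz1 : ENNReal.ofReal (|u (cpt + w) + u (cpt - w) - 2 * u cpt| / ‖w‖ ^ α) ≤
            zygmundSemi α (ball cpt ((2:ℝ)^(-(k:ℝ)))) u :=
          le_iSup_of_le cpt (le_iSup_of_le w (le_iSup_of_le hwne (le_iSup_of_le hmem1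
            (le_iSup_of_le hmem2 (le_iSup_of_le hmem3 le_rfl)))))
        exact hz1.trans (le_iSup (fun x0 => zygmundSemi α (ball x0 ((2:ℝ)^(-(k:ℝ)))) u) cpt)
      have hZfin : (⨆ x0 : EuclideanSpace ℝ (Fin d),
          zygmundSemi α (ball x0 ((2:ℝ)^(-(k:ℝ)))) u) ≠ ⊤ := by
        intro hcon
        apply hterm k
        rw [hcon, ENNReal.mul_top
          ((ENNReal.ofReal_pos.2 (Real.rpow_pos_of_pos two_pos _)).ne')]
      have hwpos : (0:ℝ) < ‖w‖ ^ α :=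
        Real.rpow_pos_of_pos (norm_pos_iff.2 hwne) α
      have hreal : |u (cpt + w) + u (cpt - w) - 2 * u cpt| ≤
          (⨆ x0 : EuclideanSpace ℝ (Fin d),
            zygmundSemi α (ball x0 ((2:ℝ)^(-(k:ℝ)))) u).toReal * ‖w‖ ^ α :=
        (div_le_iff₀ hwpos).1 ((ENNReal.ofReal_le_iff_le_toReal hZfin).1 hz2)
      have hDdiff : D (k+1) - D k = -((2:ℝ)^k * (u (cpt + w) + u (cpt - w) - 2 * u cpt)) := by
        have e1 : cpt + w = x + ((2:ℝ)^k)⁻¹ • h := by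
          rw [hcdef, hwdef, add_assoc, ← add_smul]
          congr 2
          rw [htdef, pow_succ]
          field_simp
          ring
        have e2 : cpt - w = x := by rw [hcdef]; exact add_sub_cancel_right x w
        have e3 : cpt = x + ((2:ℝ)^(k+1))⁻¹ • h := by rw [hcdef, hwdef, htdef]
        rw [hDdef]
        simp only
        rw [← e3, e1, e2, pow_succ]
        ring
      have hexp : (2:ℝ)^(k:ℕ) * t ^ α ≤ (2:ℝ)^((k:ℝ)*(1-α)) := by
        have htr2 : t = (2:ℝ) ^ (-((k:ℝ)+1)) := by
          rw [htdef, ← Real.rpow_natCast 2 (k+1), ← Real.rpow_neg (by norm_num)]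
          push_cast
          ring_nf
        rw [htr2, ← Real.rpow_natCast 2 k, ← Real.rpow_mul (by norm_num),
          ← Real.rpow_add two_pos]
        refine (Real.rpow_le_rpow_left_iff one_lt_two).2 ?_
        nlinarith [hα.le]
      have hbk : b k = (2:ℝ)^((k:ℝ)*(1-α)) * (⨆ x0 : EuclideanSpace ℝ (Fin d),
          zygmundSemi α (ball x0 ((2:ℝ)^(-(k:ℝ)))) u).toReal := by
        rw [hbdef]
        simp only
        rw [ENNReal.toReal_mul, ENNReal.toReal_ofReal (Real.rpow_pos_of_pos two_pos _).le]
      calc |D (k+1) - D k| = (2:ℝ)^k * |u (cpt + w) + u (cpt - w) - 2 * u cpt| := by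
            rw [hDdiff, abs_neg, abs_mul, abs_of_pos (pow_pos two_pos k)]
        _ ≤ (2:ℝ)^k * ((⨆ x0 : EuclideanSpace ℝ (Fin d),
              zygmundSemi α (ball x0 ((2:ℝ)^(-(k:ℝ)))) u).toReal * ‖w‖ ^ α) := by
            exact mul_le_mul_of_nonneg_left hreal (pow_pos two_pos k).le
        _ = ((2:ℝ)^k * t ^ α) * (⨆ x0 : EuclideanSpace ℝ (Fin d),
              zygmundSemi α (ball x0 ((2:ℝ)^(-(k:ℝ)))) u).toReal := by
            rw [hwnorm]; ring
        _ ≤ (2:ℝ)^((k:ℝ)*(1-α)) * (⨆ x0 : EuclideanSpace ℝ (Fin d),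
              zygmundSemi α (ball x0 ((2:ℝ)^(-(k:ℝ)))) u).toReal :=
            mul_le_mul_of_nonneg_right hexp ENNReal.toReal_nonneg
        _ = b k := hbk.symm
    have hD0 : |D 0| ≤ M.toReal := by
      have hD0e : D 0 = u (x + h) - u x := by rw [hDdef]; simp
      have hle : ENNReal.ofReal |u (x + h) - u x| ≤ M := by
        rw [hMdef]
        refine le_iSup_of_le (x + h) (le_iSup_of_le x (le_iSup_of_le ?_ le_rfl))
        rw [add_sub_cancel_left]; exact hh1
      rw [hD0e]
      exact (ENNReal.ofReal_le_iff_le_toReal hM).1 hle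
    have hDn : ∀ n, |D n| ≤ M.toReal + ∑' k, b k := by
      intro n
      have h1 : |D n| - |D 0| ≤ |D n - D 0| := abs_sub_abs_le_abs_sub (D n) (D 0)
      have h2 : |D n - D 0| ≤ ∑ i ∈ Finset.range n, |D (i+1) - D i| := by
        have hds := dist_le_range_sum_dist D n
        simp only [Real.dist_eq] at hds
        calc |D n - D 0| = |D 0 - D n| := abs_sub_comm _ _
          _ ≤ ∑ i ∈ Finset.range n, |D i - D (i+1)| := hds
          _ = ∑ i ∈ Finset.range n, |D (i+1) - D i| := by
              refine Finset.sum_congr rfl fun i _ => abs_sub_comm _ _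
      have h3 : ∑ i ∈ Finset.range n, |D (i+1) - D i| ≤ ∑ i ∈ Finset.range n, b i :=
        Finset.sum_le_sum fun i _ => hkey i
      have h4 : ∑ i ∈ Finset.range n, b i ≤ ∑' k, b k :=
        Summable.sum_le_tsum _ (fun i _ => hbnn i) hbsum
      linarith
    have hgle : ‖g‖ ≤ M.toReal + ∑' k, b k := by
      have habs : Tendsto (fun n => |D n|) atTop (𝓝 |‖g‖|) := hlim'.abs
      rw [abs_norm] at habs
      exact le_of_tendsto habs (Filter.Eventually.of_forall hDn)
    have hsum_eq : ENNReal.ofReal (∑' k, b k) = S := by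
      rw [hbdef, ← ENNReal.tsum_toReal_eq hterm,
        ENNReal.ofReal_toReal (by rw [← hSdef]; exact hS), hSdef]
    calc ENNReal.ofReal ‖g‖ ≤ ENNReal.ofReal (M.toReal + ∑' k, b k) :=
          ENNReal.ofReal_le_ofReal hgle
      _ ≤ ENNReal.ofReal M.toReal + ENNReal.ofReal (∑' k, b k) := ENNReal.ofReal_add_le
      _ = M + S := by rw [ENNReal.ofReal_toReal hM, hsum_eq]
      _ ≤ 2 * S + 2 * M := by
          rw [add_comm]
          exact add_le_add (le_mul_of_one_le_left' one_le_two)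
            (le_mul_of_one_le_left' one_le_two)
  · -- Part 2
    rw [hof2]
    calc (∑' k : ℕ, ENNReal.ofReal ((2:ℝ) ^ ((k:ℝ) * (1 - α))) *
              ⨆ x0 : EuclideanSpace ℝ (Fin d),
                zygmundSemi α (ball x0 ((2:ℝ) ^ (-(k:ℝ)))) u)
        ≤ ∑' k : ℕ, 2 * (ENNReal.ofReal ((2:ℝ) ^ ((k:ℝ) * (1 - α))) *
              ⨆ x0 : EuclideanSpace ℝ (Fin d),
                ⨅ (a0 : ℝ) (b : EuclideanSpace ℝ (Fin d)),
                  holderSemi α (ball x0 ((2:ℝ) ^ (-(k:ℝ))))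
                    (fun x => u x - (a0 + (inner ℝ b x : ℝ)))) := by
          refine ENNReal.tsum_le_tsum fun k => ?_
          rw [mul_left_comm]
          refine mul_le_mul_right ?_ _
          refine iSup_le fun x0 => ?_
          have h1 : zygmundSemi α (ball x0 ((2:ℝ) ^ (-(k:ℝ)))) u ≤
              2 * ⨅ (a0 : ℝ) (b : EuclideanSpace ℝ (Fin d)),
                holderSemi α (ball x0 ((2:ℝ) ^ (-(k:ℝ))))
                  (fun x => u x - (a0 + (inner ℝ b x : ℝ))) := by
            rw [ENNReal.mul_iInf_of_ne (by norm_num) (by norm_num)]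
            refine le_iInf fun a0 => ?_
            rw [ENNReal.mul_iInf_of_ne (by norm_num) (by norm_num)]
            refine le_iInf fun b => ?_
            rw [← zyg_sub_affine α a0 b (ball x0 ((2:ℝ) ^ (-(k:ℝ)))) u]
            exact zyg_le_two_holder _ _ _
          exact h1.trans (mul_le_mul_right (le_iSup _ x0) (2:ℝ≥0∞))
      _ = 2 * ∑' k : ℕ, ENNReal.ofReal ((2:ℝ) ^ ((k:ℝ) * (1 - α))) *
              ⨆ x0 : EuclideanSpace ℝ (Fin d),
                ⨅ (a0 : ℝ) (b : EuclideanSpace ℝ (Fin d)),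
                  holderSemi α (ball x0 ((2:ℝ) ^ (-(k:ℝ))))
                    (fun x => u x - (a0 + (inner ℝ b x : ℝ))) := ENNReal.tsum_mul_left
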